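/- Axiom (R4) (associativity of relative multiplication) is independent of the remaining Tarski axioms: in McKinsey's 8-element complex algebra over the partial algebra on {0,1,2} with 0 the identity, 1∘1=0, 2∘2=0, and 1∘2, 2∘1 undefined (so that X;Y = {x∘y : x∈X, y∈Y, x∘y defined}, converse is the identity, and the identity element is {0}), axioms (R1)-(R3) and (R5)-(R10) all hold but (R4) fails, since {1};({2};{2}) = {1} while ({1};{2});{2} = ∅. -/
import Mathlib


/-- The partial binary operation of McKinsey's three-element partial algebra on
{0,1,2}: 0 is a two-sided identity, 1∘1 = 0, 2∘2 = 0, and 1∘2, 2∘1 are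
undefined. -/
def pmul (x y : Fin 3) : Option (Fin 3) :=
  if x = 0 then some y else if y = 0 then some x else if x = y then some 0 else none

/-- Relative multiplication in McKinsey's complex algebra:
X;Y = {x∘y : x ∈ X, y ∈ Y, x∘y defined}. -/
def cm (X Y : Set (Fin 3)) : Set (Fin 3) :=
  {z | ∃ x ∈ X, ∃ y ∈ Y, pmul x y = some z}

lemma pmul_symm : ∀ x y : Fin 3, pmul x y = pmul y x := by decide

lemma pmul_zero : ∀ x : Fin 3, pmul x 0 = some x := by decide

lemma pmul_cyc (x w z : Fin 3) (h : pmul x w = some z) : pmul x z = some w := by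
  revert h; revert x w z; decide

lemma cm_comm (X Y : Set (Fin 3)) : cm X Y = cm Y X := by
  ext z
  constructor <;> rintro ⟨x, hx, y, hy, h⟩ <;>
    exact ⟨y, hy, x, hx, (pmul_symm y x).trans h⟩

lemma failLHS : cm {1} (cm {2} {2}) = ({1} : Set (Fin 3)) := by
  have h22 : cm {2} {2} = ({0} : Set (Fin 3)) := by
    ext z
    constructor
    · rintro ⟨x, rfl, y, rfl, h⟩
      simpa [pmul] using h.symm
    · rintro rfl
      exact ⟨2, rfl, 2, rfl, by decide⟩
  rw [h22]
  ext z
  constructor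
  · rintro ⟨x, rfl, y, rfl, h⟩
    simpa [pmul] using h.symm
  · rintro rfl
    exact ⟨1, rfl, 0, rfl, pmul_zero 1⟩

lemma failRHS : cm (cm {1} {2}) {2} = (∅ : Set (Fin 3)) := by
  have h12 : cm {1} {2} = (∅ : Set (Fin 3)) := by
    ext z
    simp only [Set.mem_empty_iff_false, iff_false]
    rintro ⟨x, rfl, y, rfl, h⟩
    simp [pmul] at h
  rw [h12]
  ext z
  simp only [Set.mem_empty_iff_false, iff_false]
  rintro ⟨x, hx, _, _, _⟩
  exact hx

/-- Axiom (R4) (associativity of ;) is independent of the remaining Tarski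
axioms: in McKinsey's 8-element complex algebra (union as +, set complement
as -, cm as ;, identity as converse, {0} as 1'), axioms (R1)-(R3) and
(R5)-(R10) all hold but (R4) fails, since {1};({2};{2}) = {1} while
({1};{2});{2} = ∅. -/
theorem R4_independent :
    (∀ X Y : Set (Fin 3), X ∪ Y = Y ∪ X) ∧
    (∀ X Y Z : Set (Fin 3), X ∪ (Y ∪ Z) = (X ∪ Y) ∪ Z) ∧
    (∀ X Y : Set (Fin 3), (Xᶜ ∪ Y)ᶜ ∪ (Xᶜ ∪ Yᶜ)ᶜ = X) ∧
    (∀ X : Set (Fin 3), cm X {0} = X) ∧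
    (∀ X : Set (Fin 3), id (id X) = X) ∧
    (∀ X Y : Set (Fin 3), id (cm X Y) = cm (id Y) (id X)) ∧
    (∀ X Y Z : Set (Fin 3), cm (X ∪ Y) Z = cm X Z ∪ cm Y Z) ∧
    (∀ X Y : Set (Fin 3), id (X ∪ Y) = id X ∪ id Y) ∧
    (∀ X Y : Set (Fin 3), cm (id X) (cm X Y)ᶜ ∪ Yᶜ = Yᶜ) ∧
    ¬ (∀ X Y Z : Set (Fin 3), cm X (cm Y Z) = cm (cm X Y) Z) ∧
    cm {1} (cm {2} {2}) = {1} ∧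
    cm (cm {1} {2}) {2} = (∅ : Set (Fin 3)) := by
  refine ⟨Set.union_comm, fun X Y Z => (Set.union_assoc X Y Z).symm, ?_, ?_, fun _ => rfl,
    ?_, ?_, fun _ _ => rfl, ?_, ?_, failLHS, failRHS⟩
  · intro X Y
    ext z
    by_cases hX : z ∈ X <;> by_cases hY : z ∈ Y <;> simp [hX, hY]
  · intro X
    ext z
    constructor
    · rintro ⟨x, hx, y, rfl, h⟩
      rw [pmul_zero] at h
      obtain rfl := Option.some_inj.mp h
      exact hx
    · intro hz
      exact ⟨z, hz, 0, rfl, pmul_zero z⟩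
  · intro X Y
    simpa using cm_comm X Y
  · intro X Y Z
    ext z
    constructor
    · rintro ⟨x, hx | hx, y, hy, h⟩
      · exact Or.inl ⟨x, hx, y, hy, h⟩
      · exact Or.inr ⟨x, hx, y, hy, h⟩
    · rintro (⟨x, hx, y, hy, h⟩ | ⟨x, hx, y, hy, h⟩)
      · exact ⟨x, Or.inl hx, y, hy, h⟩
      · exact ⟨x, Or.inr hx, y, hy, h⟩
  · intro X Y
    apply Set.union_eq_self_of_subset_left
    rintro z ⟨x, hx, w, hw, h⟩ hz
    exact hw ⟨x, hx, z, hz, pmul_cyc x w z h⟩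
  · intro h
    have := h {1} {2} {2}
    rw [failLHS, failRHS] at this
    exact (this ▸ rfl : (1 : Fin 3) ∈ (∅ : Set (Fin 3)))
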